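/- Let f : 𝔹ⁿ → 𝔹ⁿ be a Boolean network whose interaction graph has a positive feedback vertex set I (a set of vertices meeting every cycle of positive sign in G(f)). Then the asynchronous dynamics AD(f) has at most 2^{|I|} attractors. -/

import Mathlib

open Function Relation

/-- Flip coordinate `i` of a Boolean state. -/
def flipc {V : Type*} [DecidableEq V] (x : V → Bool) (i : V) : V → Bool :=
  Function.update x i (!(x i))

/-- Transition relation of the asynchronous dynamics `AD f`. -/
def Step {V : Type*} [DecidableEq V] (f : (V → Bool) → V → Bool) (x y : V → Bool) : Prop :=
  ∃ i, f x i ≠ x i ∧ y = flipc x i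

/-- Trap set of the asynchronous dynamics. -/
def IsTrap {V : Type*} [DecidableEq V] (f : (V → Bool) → V → Bool) (T : Set (V → Bool)) : Prop :=
  ∀ x ∈ T, ∀ y, Step f x y → y ∈ T

/-- Attractor: minimal nonempty trap set. -/
def IsAttractor {V : Type*} [DecidableEq V] (f : (V → Bool) → V → Bool) (A : Set (V → Bool)) : Prop :=
  A.Nonempty ∧ IsTrap f A ∧ ∀ B ⊆ A, B.Nonempty → IsTrap f B → B = A

/-- `R(x)`: replace coordinate `v` by `f_v(x)`. -/
def Rv {n : ℕ} (f : (Fin n → Bool) → Fin n → Bool) (v : Fin n) (x : Fin n → Bool) : Fin n → Bool :=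
  Function.update x v (f x v)

/-- `R^a(x)`: replace coordinate `v` by `f_v(x^{v=a})`. -/
def Ra {n : ℕ} (f : (Fin n → Bool) → Fin n → Bool) (v : Fin n) (a : Bool) (x : Fin n → Bool) :
    Fin n → Bool :=
  Function.update x v (f (Function.update x v a) v)

/-- Projection forgetting coordinate `v`. -/
def proj {n : ℕ} (v : Fin n) (x : Fin n → Bool) : {i : Fin n // i ≠ v} → Bool :=
  fun i => x i.1

/-- No loop at `v` in the interaction graph. -/
def NoLoop {n : ℕ} (f : (Fin n → Bool) → Fin n → Bool) (v : Fin n) : Prop :=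
  ∀ x, f x v = f (flipc x v) v

/-- No positive loop at `v` in the interaction graph. -/
def NoPosLoop {n : ℕ} (f : (Fin n → Bool) → Fin n → Bool) (v : Fin n) : Prop :=
  ∀ x, f (Function.update x v true) v = true → f (Function.update x v false) v = true

/-- Boolean value as an integer. -/
def bint (b : Bool) : ℤ := if b then 1 else 0

/-- `G(f)` has an edge `j → i` of sign `s`. -/
def HasEdge {V : Type*} [DecidableEq V] (f : (V → Bool) → V → Bool) (j i : V) (s : ℤ) : Prop :=
  ∃ x, (bint (f (flipc x j) i) - bint (f x i)) * (bint (!(x j)) - bint (x j)) = s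

/-- `I` is a positive feedback vertex set of `G(f)`: it meets every positive cycle. -/
def PosFVS {n : ℕ} (f : (Fin n → Bool) → Fin n → Bool) (I : Finset (Fin n)) : Prop :=
  ∀ (k : ℕ) (c : Fin (k + 1) → Fin n) (s : Fin (k + 1) → ℤ),
    Function.Injective c →
    (∀ i, HasEdge f (c i) (c (i + 1)) (s i)) →
    (∀ i, s i = 1 ∨ s i = -1) →
    (∏ i, s i) = 1 →
    ∃ i, c i ∈ I


section AuxProof

variable {n : ℕ}

lemma bint_sq {a b : Bool} (h : a ≠ b) :
    (bint b - bint a) * (bint b - bint a) = 1 := by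
  cases a <;> cases b <;> simp_all [bint]

lemma bint_pm {a b : Bool} (h : a ≠ b) :
    (bint b - bint a) = 1 ∨ (bint b - bint a) = -1 := by
  cases a <;> cases b <;> simp_all [bint]

lemma flip_ne {a b : Bool} (h : a ≠ b) : b = !a := by
  cases a <;> cases b <;> simp_all

/-- Path lemma: if `f · i` differs on `x` and `z`, there is a coordinate `j` where `x`
and `z` differ and an edge `j → i` with the "relative" sign. -/
lemma exists_edge (f : (Fin n → Bool) → Fin n → Bool) (i : Fin n) :
    ∀ (N : ℕ) (x z : Fin n → Bool),
      (Finset.univ.filter fun j => x j ≠ z j).card ≤ N →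
      f x i ≠ f z i →
      ∃ j, x j ≠ z j ∧
        HasEdge f j i ((bint (f z i) - bint (f x i)) * (bint (z j) - bint (x j))) := by
  intro N
  induction N with
  | zero =>
      intro x z hc hf
      exfalso
      apply hf
      have hxz : x = z := by
        funext j
        by_contra hj
        have hjm : j ∈ Finset.univ.filter fun j => x j ≠ z j := by simp [hj]
        have := Finset.card_pos.mpr ⟨j, hjm⟩
        omega
      rw [hxz]
  | succ N ih =>
      intro x z hc hf
      have hxz : x ≠ z := fun h => hf (by rw [h])
      obtain ⟨j0, hj0⟩ : ∃ j, x j ≠ z j := by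
        by_contra h
        push_neg at h
        exact hxz (funext h)
      have hzj0 : z j0 = !(x j0) := flip_ne hj0
      by_cases h1 : f (flipc x j0) i = f x i
      · have heq : (Finset.univ.filter fun j => flipc x j0 j ≠ z j)
            = (Finset.univ.filter fun j => x j ≠ z j).erase j0 := by
          ext j
          by_cases hj : j = j0
          · subst hj
            rw [Finset.mem_filter, Finset.mem_erase]
            simp [flipc, hzj0]
          · rw [Finset.mem_filter, Finset.mem_erase, Finset.mem_filter]
            simp [flipc, Function.update_of_ne hj, hj]
        have hcard : (Finset.univ.filter fun j => flipc x j0 j ≠ z j).card ≤ N := by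
          rw [heq, Finset.card_erase_of_mem (by simp [hj0])]
          omega
        have hf' : f (flipc x j0) i ≠ f z i := by rw [h1]; exact hf
        obtain ⟨j, hj, he⟩ := ih (flipc x j0) z hcard hf'
        have hjj0 : j ≠ j0 := by
          intro h
          subst h
          apply hj
          simp [flipc, hzj0]
        have hfx : flipc x j0 j = x j := Function.update_of_ne hjj0 _ _
        refine ⟨j, ?_, ?_⟩
        · rwa [hfx] at hj
        · rwa [h1, hfx] at he
      · refine ⟨j0, hj0, x, ?_⟩
        have h2 : f (flipc x j0) i = f z i := by
          cases hfa : f x i <;> cases hfb : f z i <;>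
            cases hfc : f (flipc x j0) i <;> simp_all
        rw [h2, hzj0]

lemma attractor_inter {f : (Fin n → Bool) → Fin n → Bool}
    {A B : Set (Fin n → Bool)} (hA : IsAttractor f A) (hB : IsAttractor f B)
    (hne : A ≠ B) : ∀ w, w ∈ A → w ∉ B := by
  intro w hwA hwB
  apply hne
  have hT : IsTrap f (A ∩ B) := fun x hx y hs => ⟨hA.2.1 x hx.1 y hs, hB.2.1 x hx.2 y hs⟩
  have h1 := hA.2.2 (A ∩ B) Set.inter_subset_left ⟨w, hwA, hwB⟩ hT
  have h2 := hB.2.2 (A ∩ B) Set.inter_subset_right ⟨w, hwA, hwB⟩ hT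
  exact h1.symm.trans h2

/-- Two attractors containing states that agree on a positive feedback vertex set are equal. -/
lemma attr_eq {f : (Fin n → Bool) → Fin n → Bool} {I : Finset (Fin n)} (hI : PosFVS f I)
    {A B : Set (Fin n → Bool)} (hA : IsAttractor f A) (hB : IsAttractor f B)
    {x0 z0 : Fin n → Bool} (hx0 : x0 ∈ A) (hz0 : z0 ∈ B)
    (hagree0 : ∀ i ∈ I, x0 i = z0 i) : A = B := by
  classical
  by_contra hne
  have hdisj : ∀ w, w ∈ A → w ∉ B := attractor_inter hA hB hne
  set S : Set ℕ := {m | ∃ x z, x ∈ A ∧ z ∈ B ∧ (∀ i ∈ I, x i = z i) ∧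
      (Finset.univ.filter fun j => x j ≠ z j).card = m} with hSdef
  have hSne : S.Nonempty := ⟨_, x0, z0, hx0, hz0, hagree0, rfl⟩
  obtain ⟨x, z, hx, hz, hag, hcard⟩ := Nat.sInf_mem hSne
  have hpos : 0 < sInf S := by
    rcases Nat.eq_zero_or_pos (sInf S) with h0 | h0
    · exfalso
      have hxz : x = z := by
        funext j
        by_contra hj
        have hjm : j ∈ Finset.univ.filter fun j => x j ≠ z j := by simp [hj]
        have := Finset.card_pos.mpr ⟨j, hjm⟩
        omega
      exact hdisj x hx (hxz ▸ hz)
    · exact h0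
  -- every differing coordinate is frozen in both x and z
  have hfix : ∀ i, x i ≠ z i → f x i = x i ∧ f z i = z i := by
    intro i hi
    have hiI : i ∉ I := fun hiI => hi (hag i hiI)
    constructor
    · by_contra hfi
      have hx' : flipc x i ∈ A := hA.2.1 x hx _ ⟨i, hfi, rfl⟩
      have hzi : z i = !(x i) := flip_ne hi
      have heq : (Finset.univ.filter fun j => flipc x i j ≠ z j)
          = (Finset.univ.filter fun j => x j ≠ z j).erase i := by
        ext j
        by_cases hj : j = i
        · subst hj
          rw [Finset.mem_filter, Finset.mem_erase]
          simp [flipc, hzi]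
        · rw [Finset.mem_filter, Finset.mem_erase, Finset.mem_filter]
          simp [flipc, Function.update_of_ne hj, hj]
      have hmem : (Finset.univ.filter fun j => flipc x i j ≠ z j).card ∈ S :=
        ⟨flipc x i, z, hx', hz, fun j hj => by
          have hji : j ≠ i := fun h => hiI (h ▸ hj)
          rw [show flipc x i j = x j from Function.update_of_ne hji _ _]
          exact hag j hj, rfl⟩
      have hle := Nat.sInf_le hmem
      rw [heq, Finset.card_erase_of_mem (by simp [hi]), hcard] at hle
      omega
    · by_contra hfi
      have hz' : flipc z i ∈ B := hB.2.1 z hz _ ⟨i, hfi, rfl⟩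
      have hxi : x i = !(z i) := flip_ne (Ne.symm hi)
      have heq : (Finset.univ.filter fun j => x j ≠ flipc z i j)
          = (Finset.univ.filter fun j => x j ≠ z j).erase i := by
        ext j
        by_cases hj : j = i
        · subst hj
          rw [Finset.mem_filter, Finset.mem_erase]
          simp [flipc, hxi]
        · rw [Finset.mem_filter, Finset.mem_erase, Finset.mem_filter]
          simp [flipc, Function.update_of_ne hj, hj]
      have hmem : (Finset.univ.filter fun j => x j ≠ flipc z i j).card ∈ S :=
        ⟨x, flipc z i, hx, hz', fun j hj => by
          have hji : j ≠ i := fun h => hiI (h ▸ hj)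
          rw [show flipc z i j = z j from Function.update_of_ne hji _ _]
          exact hag j hj, rfl⟩
      have hle := Nat.sInf_le hmem
      rw [heq, Finset.card_erase_of_mem (by simp [hi]), hcard] at hle
      omega
  -- choice of in-neighbours realizing the relative sign
  have key : ∀ i : Fin n, ∃ j, x i ≠ z i →
      (x j ≠ z j ∧ HasEdge f j i
        ((bint (z i) - bint (x i)) * (bint (z j) - bint (x j)))) := by
    intro i
    by_cases hi : x i ≠ z i
    · have hfi : f x i ≠ f z i := by
        rw [(hfix i hi).1, (hfix i hi).2]; exact hi
      obtain ⟨j, hj, he⟩ := exists_edge f i _ x z le_rfl hfi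
      rw [(hfix i hi).1, (hfix i hi).2] at he
      exact ⟨j, fun _ => ⟨hj, he⟩⟩
    · exact ⟨i, fun h => absurd h hi⟩
  choose g hg using key
  -- a starting point in the difference set
  obtain ⟨i0, hi0m⟩ := Finset.card_pos.mp (by omega : 0 < (Finset.univ.filter fun j => x j ≠ z j).card)
  have hi0 : x i0 ≠ z i0 := by simpa using hi0m
  -- iterate g
  set seq : ℕ → Fin n := fun t => g^[t] i0 with hseqdef
  have hseq_succ : ∀ t, seq (t + 1) = g (seq t) := fun t => Function.iterate_succ_apply' g t i0
  have hseqD : ∀ t, x (seq t) ≠ z (seq t) := by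
    intro t
    induction t with
    | zero => exact hi0
    | succ t iht =>
        rw [hseq_succ]
        exact (hg (seq t) iht).1
  -- find a minimal repetition
  have hexT : {t : ℕ | ∃ a, a < t ∧ seq a = seq t}.Nonempty := by
    obtain ⟨a0, b0, hab, hfeq⟩ := Finite.exists_ne_map_eq_of_infinite seq
    rcases lt_or_gt_of_ne hab with h | h
    · exact ⟨b0, a0, h, hfeq⟩
    · exact ⟨a0, b0, h, hfeq.symm⟩
  obtain ⟨a, ha, hab⟩ := Nat.sInf_mem hexT
  set b0 := sInf {t : ℕ | ∃ a, a < t ∧ seq a = seq t} with hb0def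
  have hinj : ∀ s s', s < s' → s' < b0 → seq s ≠ seq s' := by
    intro s s' hss hs' hEq
    have hmem : s' ∈ {t : ℕ | ∃ a, a < t ∧ seq a = seq t} := ⟨s, hss, hEq⟩
    have := Nat.sInf_le hmem
    omega
  have hinj' : ∀ s s', s < b0 → s' < b0 → seq s = seq s' → s = s' := by
    intro s s' hs hs' hEq
    rcases lt_trichotomy s s' with h | h | h
    · exact absurd hEq (hinj s s' h hs')
    · exact h
    · exact absurd hEq.symm (hinj s' s h hs)
  obtain ⟨k, hk⟩ : ∃ k, b0 - a = k + 1 := ⟨b0 - a - 1, by omega⟩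
  -- the cycle
  set c : Fin (k + 1) → Fin n := fun m => seq (b0 - m.val) with hcdef
  have hcD : ∀ m, x (c m) ≠ z (c m) := fun m => hseqD _
  have hval1 : ∀ m : Fin (k + 1), m.val < k → ((m + 1 : Fin (k + 1))).val = m.val + 1 := by
    intro m hm
    have : ((1 : Fin (k + 1))).val = 1 % (k + 1) := rfl
    simp [Fin.add_def, Nat.mod_eq_of_lt, Nat.mod_eq_of_lt (by omega : m.val + 1 < k + 1), this,
      Nat.mod_eq_of_lt (by omega : 1 < k + 1)]
  have hvalk : ∀ m : Fin (k + 1), m.val = k → ((m + 1 : Fin (k + 1))).val = 0 := by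
    intro m hm
    have : ((1 : Fin (k + 1))).val = 1 % (k + 1) := rfl
    simp [Fin.add_def, this, hm, Nat.add_mod_left]
  have hkey : ∀ m : Fin (k + 1), c m = g (c (m + 1)) := by
    intro m
    have hmlt := m.isLt
    by_cases hm : m.val = k
    · have h1 : c (m + 1) = seq b0 := by
        rw [hcdef]
        simp only [hvalk m hm, Nat.sub_zero]
      rw [h1, ← hab, ← hseq_succ]
      show seq (b0 - m.val) = seq (a + 1)
      congr 1
      omega
    · have hmk : m.val < k := by omega
      have h1 : c (m + 1) = seq (b0 - (m.val + 1)) := by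
        rw [hcdef]
        simp only [hval1 m hmk]
      rw [h1, ← hseq_succ]
      show seq (b0 - m.val) = seq (b0 - (m.val + 1) + 1)
      congr 1
      omega
  have hcinj : Function.Injective c := by
    intro m m' hEq
    have hmlt := m.isLt
    have hmlt' := m'.isLt
    by_contra hne'
    have hvne : m.val ≠ m'.val := fun h => hne' (Fin.ext h)
    have hEq' : seq (b0 - m.val) = seq (b0 - m'.val) := hEq
    rcases Nat.eq_zero_or_pos m.val with h0 | h0 <;> rcases Nat.eq_zero_or_pos m'.val with h0' | h0'
    · omega
    · have h2 : seq a = seq (b0 - m'.val) := by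
        rw [hab]
        simpa [h0] using hEq'
      have := hinj' a (b0 - m'.val) (by omega) (by omega) h2
      omega
    · have h2 : seq a = seq (b0 - m.val) := by
        rw [hab]
        simpa [h0'] using hEq'.symm
      have := hinj' a (b0 - m.val) (by omega) (by omega) h2
      omega
    · have := hinj' (b0 - m.val) (b0 - m'.val) (by omega) (by omega) hEq'
      omega
  set E : Fin (k + 1) → ℤ := fun m => bint (z (c m)) - bint (x (c m)) with hEdef
  have hedges : ∀ m : Fin (k + 1), HasEdge f (c m) (c (m + 1)) (E (m + 1) * E m) := by
    intro m
    have h := (hg (c (m + 1)) (hcD (m + 1))).2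
    rw [← hkey m] at h
    exact h
  have hsigns : ∀ m : Fin (k + 1), E (m + 1) * E m = 1 ∨ E (m + 1) * E m = -1 := by
    intro m
    rcases bint_pm (hcD (m + 1)) with h1 | h1 <;> rcases bint_pm (hcD m) with h2 | h2 <;>
      rw [hEdef] <;> simp only [] <;> rw [h1, h2] <;> norm_num
  have hprod : (∏ m : Fin (k + 1), E (m + 1) * E m) = 1 := by
    have h1 : (∏ m : Fin (k + 1), E (m + 1)) = ∏ m : Fin (k + 1), E m :=
      Fintype.prod_equiv (Equiv.addRight (1 : Fin (k + 1))) _ _ fun m => rfl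
    rw [Finset.prod_mul_distrib, h1, ← Finset.prod_mul_distrib]
    rw [Finset.prod_congr rfl fun m _ => bint_sq (hcD m)]
    exact Finset.prod_const_one
  obtain ⟨m, hmI⟩ := hI k c (fun m => E (m + 1) * E m) hcinj hedges hsigns hprod
  exact hcD m (hag (c m) hmI)

end AuxProof

theorem stmt19 (n : ℕ) (f : (Fin n → Bool) → Fin n → Bool)
    (I : Finset (Fin n)) (hI : PosFVS f I) :
    Nat.card {A : Set (Fin n → Bool) | IsAttractor f A} ≤ 2 ^ I.card := by
  classical
  have hmap : ∀ A : {A : Set (Fin n → Bool) | IsAttractor f A}, IsAttractor f A.1 := fun A => A.2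
  have hΨinj : Function.Injective
      (fun A : {A : Set (Fin n → Bool) | IsAttractor f A} =>
        (fun i : {i // i ∈ I} => (hmap A).1.choose i.1)) := by
    intro A B h
    have hagree : ∀ i ∈ I, (hmap A).1.choose i = (hmap B).1.choose i := by
      intro i hi
      exact congrFun h ⟨i, hi⟩
    exact Subtype.ext (attr_eq hI (hmap A) (hmap B) (hmap A).1.choose_spec
      (hmap B).1.choose_spec hagree)
  calc Nat.card {A : Set (Fin n → Bool) | IsAttractor f A}
      ≤ Nat.card ({i // i ∈ I} → Bool) := Nat.card_le_card_of_injective _ hΨinj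
    _ = 2 ^ I.card := by
        rw [Nat.card_eq_fintype_card, Fintype.card_fun]
        simp [Fintype.card_coe]
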